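/- For every positive integer n, D_9(n) := Σ_{k=1}^{n} [2n, n−k] · k^9 equals [2n, n] · ((2n−1)^2 / 4) · (12n^3 − 48n^2 + 66n − 31) + (1/4) · (n^8 + 8n^7 + 22n^6 + 2n^5 − 98n^4 − 52n^3 + 283n^2 − 190n + 31). -/

import Mathlib

open Finset

/-- Rising factorial `(x)_n = x(x+1)⋯(x+n-1)`. -/
noncomputable def rfact (x : ℝ) : ℕ → ℝ
  | 0 => 1
  | n + 1 => rfact x n * (x + n)

/-- The bracket coefficient `[n, k] = (1/2)_n / ((1/2)_k (1/2)_{n-k})`. -/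
noncomputable def brkt (n k : ℕ) : ℝ :=
  rfact (1 / 2) n / (rfact (1 / 2) k * rfact (1 / 2) (n - k))

/-- Telescoping certificate polynomial. -/
noncomputable def Pc (n k : ℝ) : ℝ :=
  k ^ 9 / 2 + (n / 2 - 9 / 4) * k ^ 8 + (2 * n ^ 2 - 8 * n + 21 / 2) * k ^ 6
    + (6 * n ^ 3 - 28 * n ^ 2 + 95 * n / 2 - 63 / 2) * k ^ 4
    + (12 * n ^ 4 - 60 * n ^ 3 + 116 * n ^ 2 - 104 * n + 153 / 4) * k ^ 2
    + (12 * n ^ 5 - 60 * n ^ 4 + 117 * n ^ 3 - 109 * n ^ 2 + 95 * n / 2 - 31 / 4)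

lemma rfact_half_pos (m : ℕ) : 0 < rfact (1 / 2) m := by
  induction m with
  | zero => norm_num [rfact]
  | succ k ih =>
      have h : (0 : ℝ) < 1 / 2 + k := by positivity
      have : rfact (1 / 2 : ℝ) (k + 1) = rfact (1 / 2) k * (1 / 2 + k) := rfl
      rw [this]
      exact mul_pos ih h

lemma brkt_zero (N : ℕ) : brkt N 0 = 1 := by
  unfold brkt
  rw [show rfact (1 / 2 : ℝ) 0 = 1 from rfl]
  rw [Nat.sub_zero, one_mul]
  exact div_self (rfact_half_pos N).ne'

lemma brkt_succ (N j : ℕ) (h : j + 1 ≤ N) :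
    brkt N (j + 1) * (1 / 2 + (j : ℝ)) = brkt N j * ((N : ℝ) - j - 1 / 2) := by
  have h1 : N - j = (N - (j + 1)) + 1 := by omega
  have hc : ((N - (j + 1) : ℕ) : ℝ) = (N : ℝ) - (j : ℝ) - 1 := by
    rw [Nat.cast_sub h]; push_cast; ring
  have e1 := (rfact_half_pos N).ne'
  have e2 := (rfact_half_pos j).ne'
  have e3 := (rfact_half_pos (N - (j + 1))).ne'
  have e4 : (1 / 2 : ℝ) + j ≠ 0 := by positivity
  have hjN : (j : ℝ) + 1 ≤ N := by exact_mod_cast h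
  have e5 : (1 / 2 : ℝ) + ((N : ℝ) - j - 1) ≠ 0 := by
    have : (0 : ℝ) < 1 / 2 + ((N : ℝ) - j - 1) := by linarith
    linarith
  have hL : brkt N (j + 1) * (1 / 2 + (j : ℝ))
      = rfact (1 / 2) N / (rfact (1 / 2) j * rfact (1 / 2) (N - (j + 1))) := by
    unfold brkt
    rw [show rfact (1 / 2 : ℝ) (j + 1) = rfact (1 / 2) j * (1 / 2 + j) from rfl]
    field_simp
  have hR : brkt N j * ((N : ℝ) - j - 1 / 2)
      = rfact (1 / 2) N / (rfact (1 / 2) j * rfact (1 / 2) (N - (j + 1))) := by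
    unfold brkt
    rw [h1]
    rw [show rfact (1 / 2 : ℝ) ((N - (j + 1)) + 1)
        = rfact (1 / 2) (N - (j + 1)) * (1 / 2 + (N - (j + 1) : ℕ)) from rfl, hc]
    rw [show (N : ℝ) - j - 1 / 2 = 1 / 2 + ((N : ℝ) - j - 1) from by ring]
    generalize hvv : (1 / 2 + ((N : ℝ) - j - 1)) = v at e5 ⊢
    field_simp
  rw [hL, hR]

lemma tele_Icc (G : ℕ → ℝ) : ∀ m : ℕ,
    ∑ k ∈ Finset.Icc 1 m, (G k - G (k + 1)) = G 1 - G (m + 1)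
  | 0 => by simp
  | m + 1 => by
      rw [Finset.sum_Icc_succ_top (by omega : 1 ≤ m + 1), tele_Icc G m]; ring

theorem D_nine_eval (n : ℕ) (hn : 0 < n) :
    ∑ k ∈ Finset.Icc 1 n, brkt (2 * n) (n - k) * (k : ℝ) ^ 9 =
      brkt (2 * n) n * ((2 * (n : ℝ) - 1) ^ 2 / 4) *
          (12 * (n : ℝ) ^ 3 - 48 * (n : ℝ) ^ 2 + 66 * (n : ℝ) - 31) +
        (1 / 4) *
          ((n : ℝ) ^ 8 + 8 * (n : ℝ) ^ 7 + 22 * (n : ℝ) ^ 6 + 2 * (n : ℝ) ^ 5 -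
            98 * (n : ℝ) ^ 4 - 52 * (n : ℝ) ^ 3 + 283 * (n : ℝ) ^ 2 - 190 * (n : ℝ) + 31) := by
  set F : ℕ → ℝ := fun k => brkt (2 * n) (n - k) * Pc n k with hF
  have step : ∀ k : ℕ, 1 ≤ k → k < n →
      brkt (2 * n) (n - k) * (k : ℝ) ^ 9 = F k - F (k + 1) := by
    intro k hk1 hk2
    have h1 : n - k = (n - (k + 1)) + 1 := by omega
    have hle : (n - (k + 1)) + 1 ≤ 2 * n := by omega
    have key := brkt_succ (2 * n) (n - (k + 1)) hle
    rw [← h1] at key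
    have hc : ((n - (k + 1) : ℕ) : ℝ) = (n : ℝ) - k - 1 := by
      rw [Nat.cast_sub (by omega : k + 1 ≤ n)]; push_cast; ring
    rw [hc] at key
    push_cast at key
    -- key : brkt (2n) (n-k) * (1/2 + (n - k - 1)) = brkt (2n) (n-(k+1)) * (2n - (n-k-1) - 1/2)
    have hd : (n : ℝ) + k + 1 / 2 ≠ 0 := by positivity
    have hB : brkt (2 * n) (n - (k + 1))
        = brkt (2 * n) (n - k) * (((n : ℝ) - k - 1 / 2) / ((n : ℝ) + k + 1 / 2)) := by
      rw [← mul_div_assoc, eq_div_iff hd]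
      linear_combination -key
    simp only [hF]
    rw [hB]
    unfold Pc
    field_simp
    push_cast
    ring
  have tele : ∑ k ∈ Finset.Icc 1 n, brkt (2 * n) (n - k) * (k : ℝ) ^ 9
      = F 1 - Pc n n + (n : ℝ) ^ 9 := by
    obtain ⟨m, rfl⟩ : ∃ m, n = m + 1 := ⟨n - 1, by omega⟩
    rw [Finset.sum_Icc_succ_top (by omega : 1 ≤ m + 1)]
    have h2 : ∑ k ∈ Finset.Icc 1 m, brkt (2 * (m + 1)) (m + 1 - k) * (k : ℝ) ^ 9
        = ∑ k ∈ Finset.Icc 1 m, (F k - F (k + 1)) := by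
      refine Finset.sum_congr rfl fun k hk => ?_
      rw [Finset.mem_Icc] at hk
      exact step k hk.1 (by omega)
    rw [h2, tele_Icc F m]
    have hFn : F (m + 1) = Pc (m + 1 : ℕ) ((m + 1 : ℕ) : ℝ) := by
      simp only [hF]
      rw [show (m + 1) - (m + 1) = 0 from by omega, brkt_zero, one_mul]
    have hlast : brkt (2 * (m + 1)) ((m + 1) - (m + 1)) = 1 := by
      rw [Nat.sub_self, brkt_zero]
    rw [hFn, hlast, one_mul]
  rw [tele]
  -- express F 1 = brkt (2n) (n-1) * Pc n 1 via brkt (2n) n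
  have key := brkt_succ (2 * n) (n - 1) (by omega)
  rw [show (n - 1) + 1 = n from by omega] at key
  have hc : ((n - 1 : ℕ) : ℝ) = (n : ℝ) - 1 := by
    rw [Nat.cast_sub (by omega : 1 ≤ n)]; push_cast; ring
  rw [hc] at key
  push_cast at key
  have hd : (n : ℝ) + 1 / 2 ≠ 0 := by positivity
  have hB : brkt (2 * n) (n - 1)
      = brkt (2 * n) n * (((n : ℝ) - 1 / 2) / ((n : ℝ) + 1 / 2)) := by
    rw [← mul_div_assoc, eq_div_iff hd]
    linear_combination -key
  simp only [hF]
  rw [hB]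
  unfold Pc
  field_simp
  ring
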